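/- arXiv:2210.14247 — 2 statements merged into one kernel-verified Lean document; each statement's English description precedes it below -/
import Mathlib

section
/- For every function Z : ℕ×ℕ → R^d, all bounds ℓ, r ∈ ℕ², and all matrix compositions a, b over M_d, one has ⟨SS_{ℓ;r}(Z), a⟩ · ⟨SS_{ℓ;r}(Z), b⟩ = ⟨SS_{ℓ;r}(Z), a ⧢ b⟩, where ⟨SS_{ℓ;r}(Z), ·⟩ is extended R-linearly to formal R-linear combinations of matrix compositions. -/
open scoped Classical

namespace TwoParam

/-! ### The free commutative monoid on `d` generators, written additively -/

abbrev Md (d : ℕ) := Fin d →₀ ℕ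

/-! ### Raw matrices over `Md d` and matrix compositions

A raw matrix is a function `ℕ → ℕ → Md d` together with a number of rows and
columns, normalized to be `0` (= the neutral element `ε`) outside the range.
The empty composition is the `0 × 0` matrix. -/

structure RawMat (d : ℕ) where
  rows : ℕ
  cols : ℕ
  entry : ℕ → ℕ → Md d
  entry_eq_zero : ∀ i j : ℕ, rows ≤ i ∨ cols ≤ j → entry i j = 0

namespace RawMat

variable {d : ℕ}

/-- A matrix composition: no row and no column consists entirely of `ε`.
(The empty `0 × 0` matrix vacuously satisfies this.) -/
def IsComp (a : RawMat d) : Prop :=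
  (∀ i < a.rows, ∃ j < a.cols, a.entry i j ≠ 0) ∧
  (∀ j < a.cols, ∃ i < a.rows, a.entry i j ≠ 0)

/-- The empty composition. -/
def empty (d : ℕ) : RawMat d := ⟨0, 0, fun _ _ => 0, fun _ _ _ => rfl⟩

/-- Diagonal block concatenation of two matrices. -/
def diag (a b : RawMat d) : RawMat d where
  rows := a.rows + b.rows
  cols := a.cols + b.cols
  entry := fun i j =>
    if i < a.rows ∧ j < a.cols then a.entry i j
    else if a.rows ≤ i ∧ a.cols ≤ j then b.entry (i - a.rows) (j - a.cols)
    else 0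
  entry_eq_zero := by
    intro i j h
    try dsimp only
    split_ifs with h1 h2
    · exact absurd h (by omega)
    · exact b.entry_eq_zero _ _ (by omega)
    · rfl

/-- A non-empty composition is connected if it admits no nontrivial
block-diagonal decomposition into compositions. -/
def Connected (a : RawMat d) : Prop :=
  a.IsComp ∧ a ≠ empty d ∧
    ∀ b c : RawMat d, b.IsComp → c.IsComp → a = b.diag c →
      b = empty d ∨ c = empty d

/-- Total weight of a matrix: the homomorphism `Md d → ℕ` sending every
generator to `1`, summed over all entries. -/
def weight (a : RawMat d) : ℕ :=
  ∑ i ∈ Finset.range a.rows, ∑ j ∈ Finset.range a.cols,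
    (a.entry i j).sum fun _ e => e

end RawMat

/-! ### Evaluation of monomials -/

/-- For `z ∈ R^d` and `m ∈ Md d`, the evaluation `z^(m) = ∏ j, z j ^ m j`. -/
def evalMon {d : ℕ} {R : Type*} [CommRing R] (z : Fin d → R) (m : Md d) : R :=
  m.prod fun j e => z j ^ e

/-! ### Two-parameter sums signature -/

/-- Strictly increasing chains of length `m` with values in `[lo, hi)`
(0-based indexing of the data). -/
noncomputable def chainsB (m lo hi : ℕ) : Finset (Fin m → ℕ) :=
  (Fintype.piFinset fun _ : Fin m => Finset.Ico lo hi).filter StrictMono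

/-- The bounded two-parameter sums signature coefficient `⟨SS_{l;r}(Z), a⟩`. -/
noncomputable def SSb {d : ℕ} {R : Type*} [CommRing R]
    (Z : ℕ × ℕ → Fin d → R) (l r : ℕ × ℕ) (a : RawMat d) : R :=
  ∑ ι ∈ chainsB a.rows l.1 r.1, ∑ κ ∈ chainsB a.cols l.2 r.2,
    ∏ s : Fin a.rows, ∏ t : Fin a.cols, evalMon (Z (ι s, κ t)) (a.entry s t)

/-- The (unbounded) two-parameter sums signature coefficient `⟨SS(Z), a⟩`,
for finitely supported `Z` a finite sum. -/
noncomputable def SSc {d : ℕ} {R : Type*} [CommRing R]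
    (Z : ℕ × ℕ → Fin d → R) (a : RawMat d) : R :=
  ∑ᶠ ι ∈ {f : Fin a.rows → ℕ | StrictMono f},
    ∑ᶠ κ ∈ {g : Fin a.cols → ℕ | StrictMono g},
      ∏ s : Fin a.rows, ∏ t : Fin a.cols, evalMon (Z (ι s, κ t)) (a.entry s t)

/-! ### Quasi-shuffle surjections -/

/-- `qShSet m s j`: surjections `{1,…,m+s} ↠ {1,…,j}` that are strictly
increasing on the first `m` and on the last `s` arguments. -/
noncomputable def qShSet (m s j : ℕ) : Finset (Fin (m + s) → Fin j) :=
  Finset.univ.filter fun q =>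
    Function.Surjective q ∧
    (∀ u v : Fin (m + s), u < v → (v : ℕ) < m → q u < q v) ∧
    (∀ u v : Fin (m + s), u < v → m ≤ (u : ℕ) → q u < q v)

/-- The summand `c^{p,q}` of the two-parameter quasi-shuffle: the `j × k`
matrix with entries `⋆_{u ∈ p⁻¹(x), v ∈ q⁻¹(y)} diag(a,b)_{u,v}`. -/
noncomputable def qshMat {d : ℕ} (a b : RawMat d) {j k : ℕ}
    (p : Fin (a.rows + b.rows) → Fin j) (q : Fin (a.cols + b.cols) → Fin k) :
    RawMat d where
  rows := j
  cols := k
  entry := fun x y =>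
    if hx : x < j then
      if hy : y < k then
        ∑ u ∈ Finset.univ.filter (fun u => p u = ⟨x, hx⟩),
          ∑ v ∈ Finset.univ.filter (fun v => q v = ⟨y, hy⟩),
            (a.diag b).entry u v
      else 0
    else 0
  entry_eq_zero := by
    intro x y h
    try dsimp only
    split_ifs with hx hy
    · exact absurd h (by omega)
    · rfl
    · rfl

/-- The two-parameter quasi-shuffle `a ⧢ b`, as an element of the free
`R`-module on matrices.  (The empty index sets for `j` or `k` outside
`[0, rows+rows]` resp. `[0, cols+cols]` implement the conventions
`e ⧢ a = a ⧢ e = a` and `e ⧢ e = e`.) -/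
noncomputable def qsh {d : ℕ} (R : Type*) [CommRing R] (a b : RawMat d) :
    RawMat d →₀ R :=
  ∑ j ∈ Finset.range (a.rows + b.rows + 1),
    ∑ k ∈ Finset.range (a.cols + b.cols + 1),
      ∑ p ∈ qShSet a.rows b.rows j,
        ∑ q ∈ qShSet a.cols b.cols k,
          Finsupp.single (qshMat a b p q) 1

/-- Bilinear extension of the quasi-shuffle to the free module. -/
noncomputable def qshL {d : ℕ} {R : Type*} [CommRing R]
    (F G : RawMat d →₀ R) : RawMat d →₀ R :=
  F.sum fun a ra => G.sum fun b rb => (ra * rb) • qsh R a b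

/-! ### Two-parameter data: eventually zero / eventually constant functions -/

variable {V : Type*}

/-- Eventually zero two-parameter data: finite support. -/
def EvZ [Zero V] (X : ℕ × ℕ → V) : Prop := (Function.support X).Finite

/-- Eventually constant two-parameter data: there is a box outside of which
`X` is constant; i.e. whenever two values differ, one of the two indices lies
in the box. -/
def EvC (X : ℕ × ℕ → V) : Prop :=
  ∃ n : ℕ × ℕ, ∀ i j : ℕ × ℕ, X i ≠ X j →
    (i.1 ≤ n.1 ∧ i.2 ≤ n.2) ∨ (j.1 ≤ n.1 ∧ j.2 ≤ n.2)

/-- The coordinate of `i` along the axis `a` (axis `0` = rows, `1` = cols). -/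
def axC (a : Fin 2) (i : ℕ × ℕ) : ℕ := if a = 0 then i.1 else i.2

/-- Shift an index one step down along the axis `a`. -/
def shiftD (a : Fin 2) (i : ℕ × ℕ) : ℕ × ℕ :=
  if a = 0 then (i.1 - 1, i.2) else (i.1, i.2 - 1)

/-- The zero insertion operator (0-based position `k`): insert a zero
row/column at position `k` along axis `a`. -/
def zeroIns [Zero V] (a : Fin 2) (k : ℕ) (X : ℕ × ℕ → V) : ℕ × ℕ → V :=
  fun i => if axC a i < k then X i else if axC a i = k then 0 else X (shiftD a i)

/-- The warping operator (0-based position `k`): duplicate the row/column at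
position `k` along axis `a`. -/
def warp (a : Fin 2) (k : ℕ) (X : ℕ × ℕ → V) : ℕ × ℕ → V :=
  fun i => if axC a i ≤ k then X i else X (shiftD a i)

/-- The two-parameter (forward) difference operator `δ`. -/
def diffOp [AddCommGroup V] (X : ℕ × ℕ → V) : ℕ × ℕ → V := fun i =>
  X (i.1 + 1, i.2 + 1) - X (i.1 + 1, i.2) - X (i.1, i.2 + 1) + X (i.1, i.2)

/-- The summation operator `ς`, a right inverse of `δ`:
`(ς Z)_{i,j} = Σ_{s ≥ i} Σ_{t ≥ j} Z_{s,t}`. -/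
noncomputable def sigmaOp [AddCommMonoid V] (Z : ℕ × ℕ → V) : ℕ × ℕ → V :=
  fun i => ∑ᶠ p ∈ {p : ℕ × ℕ | i.1 ≤ p.1 ∧ i.2 ≤ p.2}, Z p

/-- The set of all `n ∈ ℕ²` such that `X` is determined inside the
`n.1 × n.2` upper-left box (0-based size/count convention). -/
def sizeSetC (X : ℕ × ℕ → V) : Set (ℕ × ℕ) :=
  {n | ∀ i j : ℕ × ℕ, X i ≠ X j →
    (i.1 < n.1 ∧ i.2 < n.2) ∨ (j.1 < n.1 ∧ j.2 < n.2)}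

/-- `rows(X)` for eventually constant `X`: first component of the least
element of `sizeSetC X`. -/
noncomputable def rowsC (X : ℕ × ℕ → V) : ℕ := sInf (Prod.fst '' sizeSetC X)

/-- `cols(X)` for eventually constant `X`. -/
noncomputable def colsC (X : ℕ × ℕ → V) : ℕ := sInf (Prod.snd '' sizeSetC X)

/-- `rows(Z)` for eventually zero `Z`, defined via the support. -/
noncomputable def rowsZ [Zero V] (Z : ℕ × ℕ → V) : ℕ :=
  sInf {m : ℕ | ∀ i : ℕ × ℕ, Z i ≠ 0 → i.1 < m}

/-- `cols(Z)` for eventually zero `Z`, defined via the support. -/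
noncomputable def colsZ [Zero V] (Z : ℕ × ℕ → V) : ℕ :=
  sInf {m : ℕ | ∀ i : ℕ × ℕ, Z i ≠ 0 → i.2 < m}

/-- Diagonal concatenation `A ⊘ B` on eventually zero functions,
with `rows`/`cols` taken in the eventually-constant sense. -/
noncomputable def dconc [AddCommGroup V] (A B : ℕ × ℕ → V) : ℕ × ℕ → V :=
  A + (zeroIns 0 0)^[rowsC A] ((zeroIns 1 0)^[colsC A] B)

/-- Diagonal concatenation `A ⊘ B` on eventually zero functions,
with `rows`/`cols` taken in the support sense. -/
noncomputable def dconcZ [AddCommGroup V] (A B : ℕ × ℕ → V) : ℕ × ℕ → V :=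
  A + (zeroIns 0 0)^[rowsZ A] ((zeroIns 1 0)^[colsZ A] B)

/-- Concatenation along the diagonal `X ⊠ Y` on eventually constant
functions: `ς(δX) + Warp_{1,1}^{rows X}(Warp_{2,1}^{cols X}(Y))`. -/
noncomputable def bconc [AddCommGroup V] (X Y : ℕ × ℕ → V) : ℕ × ℕ → V :=
  sigmaOp (diffOp X) + (warp 0 0)^[rowsC X] ((warp 1 0)^[colsC X] Y)


/-! ### Two-parameter quasisymmetric functions -/

/-- Monomials in the commuting variables `x_{i,j}`, `(i,j) ∈ ℕ × ℕ`. -/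
abbrev Mon := (ℕ × ℕ) →₀ ℕ

/-- Total degree of a monomial. -/
def mdeg (m : Mon) : ℕ := m.sum fun _ e => e

/-- A formal power series (given by its coefficient function) has finite
total degree. -/
def FinDeg {R : Type*} [Zero R] (f : Mon → R) : Prop :=
  ∃ D : ℕ, ∀ m : Mon, f m ≠ 0 → mdeg m ≤ D

/-- `ℕ₀`-valued raw matrices, normalized to vanish outside the range. -/
structure NMat where
  rows : ℕ
  cols : ℕ
  entry : ℕ → ℕ → ℕ
  entry_eq_zero : ∀ i j : ℕ, rows ≤ i ∨ cols ≤ j → entry i j = 0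

namespace NMat

/-- An `ℕ₀`-matrix composition: no zero row and no zero column. -/
def IsComp (a : NMat) : Prop :=
  (∀ i < a.rows, ∃ j < a.cols, a.entry i j ≠ 0) ∧
  (∀ j < a.cols, ∃ i < a.rows, a.entry i j ≠ 0)

/-- The empty composition. -/
def empty : NMat := ⟨0, 0, fun _ _ => 0, fun _ _ _ => rfl⟩

/-- Diagonal block concatenation. -/
def diag (a b : NMat) : NMat where
  rows := a.rows + b.rows
  cols := a.cols + b.cols
  entry := fun i j =>
    if i < a.rows ∧ j < a.cols then a.entry i j
    else if a.rows ≤ i ∧ a.cols ≤ j then b.entry (i - a.rows) (j - a.cols)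
    else 0
  entry_eq_zero := by
    intro i j h
    try dsimp only
    split_ifs with h1 h2
    · exact absurd h (by omega)
    · exact b.entry_eq_zero _ _ (by omega)
    · rfl

end NMat

/-- The monomial `∏_{s,t} x_{ι_s, κ_t}^{a_{s,t}}` attached to a matrix `a`
and chains `ι`, `κ`. -/
noncomputable def monomialOf (a : NMat) (ι : Fin a.rows → ℕ) (κ : Fin a.cols → ℕ) : Mon :=
  ∑ s : Fin a.rows, ∑ t : Fin a.cols, Finsupp.single (ι s, κ t) (a.entry s t)

/-- The monomial quasisymmetric function `M_a` (as a coefficient function):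
each monomial `∏ x_{ι_s,κ_t}^{a_{s,t}}` for strictly increasing chains occurs
with coefficient `1`.  In particular `M_e = 1`. -/
noncomputable def monQ {R : Type*} [CommRing R] (a : NMat) : Mon → R := fun m =>
  if ∃ (ι : Fin a.rows → ℕ) (κ : Fin a.cols → ℕ),
      StrictMono ι ∧ StrictMono κ ∧ m = monomialOf a ι κ
  then 1 else 0

/-- Two-parameter quasisymmetric function: finite degree, and for every
matrix composition `a` and all strictly increasing chains `ι`, `κ`, the
coefficients of `∏ x_{ι_s,κ_t}^{a_{s,t}}` and of `∏ x_{s,t}^{a_{s,t}}`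
coincide. -/
def IsQSym {R : Type*} [CommRing R] (f : Mon → R) : Prop :=
  FinDeg f ∧ ∀ a : NMat, a.IsComp →
    ∀ (ι : Fin a.rows → ℕ) (κ : Fin a.cols → ℕ), StrictMono ι → StrictMono κ →
      f (monomialOf a ι κ) =
        f (monomialOf a (fun s => (s : ℕ)) (fun t => (t : ℕ)))

/-- Product of formal power series (Cauchy product of coefficient
functions). -/
noncomputable def mulF {R : Type*} [CommRing R] (f g : Mon → R) : Mon → R :=
  fun m => ∑ p ∈ Finset.HasAntidiagonal.antidiagonal m, f p.1 * g p.2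

/-- Two-parameter quasisymmetric functions form an `R`-submodule of the
module of coefficient functions. -/
noncomputable def QSymSub (R : Type*) [CommRing R] : Submodule R (Mon → R) where
  carrier := {f | IsQSym f}
  add_mem' := by
    rintro f g ⟨⟨Df, hDf⟩, hf⟩ ⟨⟨Dg, hDg⟩, hg⟩
    refine ⟨⟨max Df Dg, ?_⟩, ?_⟩
    · intro m hm
      by_contra hc
      push_neg at hc
      have h1 : f m = 0 := by
        by_contra h
        have := hDf m h
        omega
      have h2 : g m = 0 := by
        by_contra h
        have := hDg m h
        omega
      apply hm
      show f m + g m = 0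
      rw [h1, h2, add_zero]
    · intro a ha ι κ hι hκ
      show f _ + g _ = f _ + g _
      rw [hf a ha ι κ hι hκ, hg a ha ι κ hι hκ]
  zero_mem' := ⟨⟨0, fun _ hm => absurd rfl hm⟩, fun _ _ _ _ _ _ => rfl⟩
  smul_mem' := by
    rintro c f ⟨⟨Df, hDf⟩, hf⟩
    refine ⟨⟨Df, ?_⟩, ?_⟩
    · intro m hm
      apply hDf
      intro h
      apply hm
      show c • f m = 0
      rw [h, smul_zero]
    · intro a ha ι κ hι hκ
      show c • f _ = c • f _
      rw [hf a ha ι κ hι hκ]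

/-- Index shift used by the free analogue of zero insertion: indices with
coordinate `≥ k` along axis `a` are shifted up by one (axis `0` = rows). -/
def liftIdx (a : Fin 2) (k : ℕ) (i : ℕ × ℕ) : ℕ × ℕ :=
  if a = 0 then (if i.1 < k then i else (i.1 + 1, i.2))
  else (if i.2 < k then i else (i.1, i.2 + 1))

/-- The free analogue of zero insertion on formal power series: the algebra
endomorphism sending `x_i ↦ x_i` for `i_a < k`, `x_i ↦ 0` for `i_a = k` and
`x_i ↦ x_{i - e_a}` for `i_a > k` (0-based position `k`).  On coefficient
functions it is given by precomposition with the index lift. -/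
noncomputable def zeroF {R : Type*} [CommRing R] (a : Fin 2) (k : ℕ)
    (f : Mon → R) : Mon → R :=
  fun m => f (m.mapDomain (liftIdx a k))

/-- The quasi-shuffle summand `c^{p,q}` for `ℕ₀`-matrices. -/
noncomputable def nQshMat (a b : NMat) {j k : ℕ}
    (p : Fin (a.rows + b.rows) → Fin j) (q : Fin (a.cols + b.cols) → Fin k) :
    NMat where
  rows := j
  cols := k
  entry := fun x y =>
    if hx : x < j then
      if hy : y < k then
        ∑ u ∈ Finset.univ.filter (fun u => p u = ⟨x, hx⟩),
          ∑ v ∈ Finset.univ.filter (fun v => q v = ⟨y, hy⟩),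
            (a.diag b).entry u v
      else 0
    else 0
  entry_eq_zero := by
    intro x y h
    try dsimp only
    split_ifs with hx hy
    · exact absurd h (by omega)
    · rfl
    · rfl

/-- One-dimensional two-parameter sums signature coefficient `⟨SS(Z), a⟩`. -/
noncomputable def SScN {K : Type*} [CommRing K] (Z : ℕ × ℕ → K) (a : NMat) : K :=
  ∑ᶠ ι ∈ {f : Fin a.rows → ℕ | StrictMono f},
    ∑ᶠ κ ∈ {g : Fin a.cols → ℕ | StrictMono g},
      ∏ s : Fin a.rows, ∏ t : Fin a.cols, Z (ι s, κ t) ^ a.entry s t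

/-- Evaluation of a formal power series at finitely supported data. -/
noncomputable def evalSeries {K : Type*} [CommRing K] (f : Mon → K)
    (Z : ℕ × ℕ → K) : K :=
  ∑ᶠ m : Mon, f m * m.prod fun i e => Z i ^ e

end TwoParam

namespace TwoParam

open Finset

section Merge

variable {m s : ℕ}

/-- Combine two tuples into one on `Fin (m + s)`. -/
def wFun (f : Fin m → ℕ) (g : Fin s → ℕ) : Fin (m + s) → ℕ :=
  fun u => if h : (u : ℕ) < m then f ⟨u, h⟩
    else g ⟨(u : ℕ) - m, by have := u.isLt; omega⟩

lemma wFun_castAdd (f : Fin m → ℕ) (g : Fin s → ℕ) (u : Fin m) :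
    wFun f g (Fin.castAdd s u) = f u := by
  have h : ((Fin.castAdd s u : Fin (m + s)) : ℕ) < m := by simpa using u.isLt
  simp only [wFun, dif_pos h]
  refine congrArg f (Fin.ext ?_)
  show ((Fin.castAdd s u : Fin (m + s)) : ℕ) = (u : ℕ)
  simp

lemma wFun_natAdd (f : Fin m → ℕ) (g : Fin s → ℕ) (u : Fin s) :
    wFun f g (Fin.natAdd m u) = g u := by
  have h : ¬ ((Fin.natAdd m u : Fin (m + s)) : ℕ) < m := by simp
  simp only [wFun, dif_neg h]
  refine congrArg g (Fin.ext ?_)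
  show ((Fin.natAdd m u : Fin (m + s)) : ℕ) - m = (u : ℕ)
  have hh : ((Fin.natAdd m u : Fin (m + s)) : ℕ) = m + u := rfl
  omega

/-- The merged value set. -/
noncomputable def mSet (f : Fin m → ℕ) (g : Fin s → ℕ) : Finset ℕ :=
  Finset.image (wFun f g) Finset.univ

noncomputable def mJ (f : Fin m → ℕ) (g : Fin s → ℕ) : ℕ := (mSet f g).card

noncomputable def mSigma (f : Fin m → ℕ) (g : Fin s → ℕ) : Fin (mJ f g) → ℕ :=
  (mSet f g).orderEmbOfFin rfl

noncomputable def mP (f : Fin m → ℕ) (g : Fin s → ℕ) : Fin (m + s) → Fin (mJ f g) :=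
  fun u => ((mSet f g).orderIsoOfFin rfl).symm
    ⟨wFun f g u, Finset.mem_image_of_mem _ (Finset.mem_univ u)⟩

lemma mSigma_strictMono (f : Fin m → ℕ) (g : Fin s → ℕ) : StrictMono (mSigma f g) :=
  ((mSet f g).orderEmbOfFin rfl).strictMono

lemma mSigma_mP (f : Fin m → ℕ) (g : Fin s → ℕ) (u : Fin (m + s)) :
    mSigma f g (mP f g u) = wFun f g u := by
  have := Finset.coe_orderIsoOfFin_apply (mSet f g) rfl
    (((mSet f g).orderIsoOfFin rfl).symm
      ⟨wFun f g u, Finset.mem_image_of_mem _ (Finset.mem_univ u)⟩)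
  rw [OrderIso.apply_symm_apply] at this
  exact this.symm

lemma mP_lt_iff (f : Fin m → ℕ) (g : Fin s → ℕ) (u v : Fin (m + s)) :
    mP f g u < mP f g v ↔ wFun f g u < wFun f g v := by
  rw [← (mSigma_strictMono f g).lt_iff_lt, mSigma_mP, mSigma_mP]

lemma mP_surj (f : Fin m → ℕ) (g : Fin s → ℕ) : Function.Surjective (mP f g) := by
  intro x
  have hx : mSigma f g x ∈ mSet f g := Finset.orderEmbOfFin_mem _ _ _
  simp only [mSet, Finset.mem_image, Finset.mem_univ, true_and] at hx
  obtain ⟨u, hu⟩ := hx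
  refine ⟨u, (mSigma_strictMono f g).injective ?_⟩
  rw [mSigma_mP, hu]

lemma mJ_le (f : Fin m → ℕ) (g : Fin s → ℕ) : mJ f g ≤ m + s := by
  have := Finset.card_image_le (s := (Finset.univ : Finset (Fin (m + s)))) (f := wFun f g)
  simpa [mJ, mSet] using this

lemma mem_chainsB {n lo hi : ℕ} {f : Fin n → ℕ} :
    f ∈ chainsB n lo hi ↔ (∀ x, f x ∈ Finset.Ico lo hi) ∧ StrictMono f := by
  simp [chainsB, Fintype.mem_piFinset]

lemma mem_qShSet {m' s' j : ℕ} {q : Fin (m' + s') → Fin j} :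
    q ∈ qShSet m' s' j ↔ Function.Surjective q ∧
      (∀ u v : Fin (m' + s'), u < v → (v : ℕ) < m' → q u < q v) ∧
      (∀ u v : Fin (m' + s'), u < v → m' ≤ (u : ℕ) → q u < q v) := by
  simp [qShSet]

lemma sigma_pair_ext {j j' : ℕ} (h : j = j')
    (p : Fin (m + s) → Fin j) (p' : Fin (m + s) → Fin j')
    (σ : Fin j → ℕ) (σ' : Fin j' → ℕ)
    (hp : ∀ u, (p u : ℕ) = (p' u : ℕ)) (hσ : ∀ x : Fin j, σ x = σ' (Fin.cast h x)) :
    (⟨j, (p, σ)⟩ : Σ n : ℕ, (Fin (m + s) → Fin n) × (Fin n → ℕ)) = ⟨j', (p', σ')⟩ := by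
  subst h
  have hpe : p = p' := funext fun u => Fin.ext (hp u)
  have hσe : σ = σ' := funext fun x => by simpa using hσ x
  rw [hpe, hσe]

lemma mergeSum {M : Type*} [AddCommMonoid M] (lo hi : ℕ)
    (F : (Fin m → ℕ) → (Fin s → ℕ) → M) :
    (∑ f ∈ chainsB m lo hi, ∑ g ∈ chainsB s lo hi, F f g) =
      ∑ j ∈ Finset.range (m + s + 1), ∑ p ∈ qShSet m s j,
        ∑ σ ∈ chainsB j lo hi,
          F (fun u => σ (p (Fin.castAdd s u))) (fun u => σ (p (Fin.natAdd m u))) := by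
  classical
  rw [← Finset.sum_product' (chainsB m lo hi) (chainsB s lo hi) (fun f g => F f g)]
  have hr : ∀ j ∈ Finset.range (m + s + 1),
      (∑ p ∈ qShSet m s j, ∑ σ ∈ chainsB j lo hi,
        F (fun u => σ (p (Fin.castAdd s u))) (fun u => σ (p (Fin.natAdd m u)))) =
      ∑ x ∈ (qShSet m s j) ×ˢ (chainsB j lo hi),
        F (fun u => x.2 (x.1 (Fin.castAdd s u))) (fun u => x.2 (x.1 (Fin.natAdd m u))) := by
    intro j _
    exact (Finset.sum_product' (qShSet m s j) (chainsB j lo hi)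
      (fun p σ => F (fun u => σ (p (Fin.castAdd s u)))
        (fun u => σ (p (Fin.natAdd m u))))).symm
  rw [Finset.sum_congr rfl hr,
    Finset.sum_sigma' (Finset.range (m + s + 1))
      (fun j => (qShSet m s j) ×ˢ (chainsB j lo hi))
      (fun j x => F (fun u => x.2 (x.1 (Fin.castAdd s u)))
        (fun u => x.2 (x.1 (Fin.natAdd m u))))]
  refine Finset.sum_nbij'
    (fun x => (⟨mJ x.1 x.2, (mP x.1 x.2, mSigma x.1 x.2)⟩ :
      Σ n : ℕ, (Fin (m + s) → Fin n) × (Fin n → ℕ)))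
    (fun y => (fun u => y.2.2 (y.2.1 (Fin.castAdd s u)),
      fun u => y.2.2 (y.2.1 (Fin.natAdd m u)))) ?_ ?_ ?_ ?_ ?_
  · rintro ⟨f, g⟩ hx
    simp only [Finset.mem_product] at hx
    obtain ⟨hfI, hfM⟩ := mem_chainsB.mp hx.1
    obtain ⟨hgI, hgM⟩ := mem_chainsB.mp hx.2
    simp only [Finset.mem_sigma, Finset.mem_product, Finset.mem_range]
    refine ⟨by have := mJ_le f g; omega, ?_, ?_⟩
    · rw [mem_qShSet]
      refine ⟨mP_surj f g, ?_, ?_⟩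
      · intro u v huv hv
        rw [mP_lt_iff]
        have hu : (u : ℕ) < m := lt_trans huv hv
        simp only [wFun, dif_pos hu, dif_pos hv]
        exact hfM huv
      · intro u v huv hu
        have hv : m ≤ (v : ℕ) := le_trans hu (le_of_lt huv)
        rw [mP_lt_iff]
        simp only [wFun, dif_neg (not_lt.mpr hu), dif_neg (not_lt.mpr hv)]
        refine hgM ?_
        show (u : ℕ) - m < (v : ℕ) - m
        omega
    · rw [mem_chainsB]
      refine ⟨?_, mSigma_strictMono f g⟩
      intro x
      have hx' : mSigma f g x ∈ mSet f g := Finset.orderEmbOfFin_mem _ _ _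
      simp only [mSet, Finset.mem_image, Finset.mem_univ, true_and] at hx'
      obtain ⟨u, hu⟩ := hx'
      rw [← hu, wFun]
      split
      · exact hfI _
      · exact hgI _
  · rintro ⟨j, p, σ⟩ hy
    simp only [Finset.mem_sigma, Finset.mem_product, Finset.mem_range] at hy
    obtain ⟨hj, hp, hσ⟩ := hy
    obtain ⟨hσI, hσM⟩ := mem_chainsB.mp hσ
    obtain ⟨psurj, pm1, pm2⟩ := mem_qShSet.mp hp
    simp only [Finset.mem_product]
    constructor
    · rw [mem_chainsB]
      refine ⟨fun u => hσI _, ?_⟩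
      intro u v huv
      refine hσM (pm1 _ _ ?_ ?_)
      · show ((Fin.castAdd s u : Fin (m + s)) : ℕ) < ((Fin.castAdd s v : Fin (m + s)) : ℕ)
        simpa using huv
      · simpa using v.isLt
    · rw [mem_chainsB]
      refine ⟨fun u => hσI _, ?_⟩
      intro u v huv
      refine hσM (pm2 _ _ ?_ ?_)
      · show ((Fin.natAdd m u : Fin (m + s)) : ℕ) < ((Fin.natAdd m v : Fin (m + s)) : ℕ)
        simpa using huv
      · simp
  · rintro ⟨f, g⟩ hx
    have h1 : (fun u => mSigma f g (mP f g (Fin.castAdd s u))) = f :=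
      funext fun u => by rw [mSigma_mP, wFun_castAdd]
    have h2 : (fun u => mSigma f g (mP f g (Fin.natAdd m u))) = g :=
      funext fun u => by rw [mSigma_mP, wFun_natAdd]
    exact Prod.ext h1 h2
  · rintro ⟨j, p, σ⟩ hy
    simp only [Finset.mem_sigma, Finset.mem_product, Finset.mem_range] at hy
    obtain ⟨hj, hp, hσ⟩ := hy
    obtain ⟨hσI, hσM⟩ := mem_chainsB.mp hσ
    obtain ⟨psurj, pm1, pm2⟩ := mem_qShSet.mp hp
    set f : Fin m → ℕ := fun u => σ (p (Fin.castAdd s u)) with hf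
    set g : Fin s → ℕ := fun u => σ (p (Fin.natAdd m u)) with hg
    have hw : wFun f g = fun u => σ (p u) := by
      funext u
      by_cases h : (u : ℕ) < m
      · have hc : Fin.castAdd s (⟨(u : ℕ), h⟩ : Fin m) = u := by ext; simp
        simp only [wFun, dif_pos h, hf]
        rw [hc]
      · have hm' : m ≤ (u : ℕ) := le_of_not_gt h
        have hc : Fin.natAdd m (⟨(u : ℕ) - m, by have := u.isLt; omega⟩ : Fin s) = u := by
          ext; simp; omega
        simp only [wFun, dif_neg h, hg]
        rw [hc]
    have hset : mSet f g = Finset.image σ Finset.univ := by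
      rw [mSet, hw]
      rw [show (fun u => σ (p u)) = σ ∘ p from rfl]
      rw [← Finset.image_image, Finset.image_univ_of_surjective psurj]
    have hcard : mJ f g = j := by
      rw [mJ, hset, Finset.card_image_of_injective _ hσM.injective, Finset.card_univ,
        Fintype.card_fin]
    have hσeq : ∀ x : Fin (mJ f g), mSigma f g x = σ (Fin.cast hcard x) := by
      have : (fun x : Fin (mJ f g) => σ (Fin.cast hcard x)) = ⇑((mSet f g).orderEmbOfFin rfl) := by
        refine Finset.orderEmbOfFin_unique rfl ?_ ?_
        · intro x
          rw [hset]
          exact Finset.mem_image_of_mem _ (Finset.mem_univ _)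
        · intro x y hxy
          refine hσM ?_
          show (Fin.cast hcard x : Fin j) < Fin.cast hcard y
          rw [Fin.lt_def]
          exact hxy
      intro x
      rw [mSigma, ← this]
    refine sigma_pair_ext hcard _ _ _ _ ?_ hσeq
    intro u
    have h1 : σ (Fin.cast hcard (mP f g u)) = σ (p u) := by
      rw [← hσeq, mSigma_mP, hw]
    have h2 : Fin.cast hcard (mP f g u) = p u := hσM.injective h1
    rw [← h2]
    rfl
  · rintro ⟨f, g⟩ hx
    have h1 : (fun u => mSigma f g (mP f g (Fin.castAdd s u))) = f :=
      funext fun u => by rw [mSigma_mP, wFun_castAdd]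
    have h2 : (fun u => mSigma f g (mP f g (Fin.natAdd m u))) = g :=
      funext fun u => by rw [mSigma_mP, wFun_natAdd]
    rw [h1, h2]

end Merge

section Pointwise

variable {d : ℕ} {R : Type*} [CommRing R]

lemma evalMon_zero (z : Fin d → R) : evalMon z 0 = 1 := Finsupp.prod_zero_index

lemma evalMon_add (z : Fin d → R) (x y : Md d) :
    evalMon z (x + y) = evalMon z x * evalMon z y :=
  Finsupp.prod_add_index' (fun a => pow_zero (z a)) (fun a b c => pow_add (z a) b c)

lemma evalMon_sum {ι : Type*} (z : Fin d → R) (t : Finset ι) (F : ι → Md d) :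
    evalMon z (∑ i ∈ t, F i) = ∏ i ∈ t, evalMon z (F i) := by
  classical
  induction t using Finset.cons_induction with
  | empty => simpa using evalMon_zero z
  | cons i t hi ih => rw [Finset.sum_cons, Finset.prod_cons, evalMon_add, ih]

lemma diag_ll (a b : RawMat d) (u v : ℕ) (hu : u < a.rows) (hv : v < a.cols) :
    (a.diag b).entry u v = a.entry u v := by
  simp only [RawMat.diag]
  rw [if_pos ⟨hu, hv⟩]

lemma diag_rr (a b : RawMat d) (u v : ℕ) (hu : a.rows ≤ u) (hv : a.cols ≤ v) :
    (a.diag b).entry u v = b.entry (u - a.rows) (v - a.cols) := by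
  simp only [RawMat.diag]
  rw [if_neg (by omega), if_pos ⟨hu, hv⟩]

lemma diag_lr (a b : RawMat d) (u v : ℕ) (hu : u < a.rows) (hv : a.cols ≤ v) :
    (a.diag b).entry u v = 0 := by
  simp only [RawMat.diag]
  rw [if_neg (by omega), if_neg (by omega)]

lemma diag_rl (a b : RawMat d) (u v : ℕ) (hu : a.rows ≤ u) (hv : v < a.cols) :
    (a.diag b).entry u v = 0 := by
  simp only [RawMat.diag]
  rw [if_neg (by omega), if_neg (by omega)]

lemma pointwise (Z : ℕ × ℕ → Fin d → R) (a b : RawMat d) {j k : ℕ}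
    (p : Fin (a.rows + b.rows) → Fin j) (q : Fin (a.cols + b.cols) → Fin k)
    (σ : Fin j → ℕ) (τ : Fin k → ℕ) :
    (∏ x : Fin j, ∏ y : Fin k, evalMon (Z (σ x, τ y)) ((qshMat a b p q).entry x y)) =
      (∏ u : Fin a.rows, ∏ v : Fin a.cols,
        evalMon (Z (σ (p (Fin.castAdd b.rows u)), τ (q (Fin.castAdd b.cols v)))) (a.entry u v)) *
      (∏ u : Fin b.rows, ∏ v : Fin b.cols,
        evalMon (Z (σ (p (Fin.natAdd a.rows u)), τ (q (Fin.natAdd a.cols v)))) (b.entry u v)) := by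
  classical
  have hstep : ∀ (x : Fin j) (y : Fin k),
      evalMon (Z (σ x, τ y)) ((qshMat a b p q).entry x y) =
        ∏ u ∈ Finset.univ.filter (fun u => p u = x),
          ∏ v ∈ Finset.univ.filter (fun v => q v = y),
            evalMon (Z (σ (p u), τ (q v))) ((a.diag b).entry u v) := by
    intro x y
    have he : (qshMat a b p q).entry x y =
        ∑ u ∈ Finset.univ.filter (fun u => p u = x),
          ∑ v ∈ Finset.univ.filter (fun v => q v = y), (a.diag b).entry u v := by
      simp only [qshMat]
      rw [dif_pos x.isLt, dif_pos y.isLt]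
    rw [he, evalMon_sum]
    refine Finset.prod_congr rfl fun u hu => ?_
    rw [evalMon_sum]
    refine Finset.prod_congr rfl fun v hv => ?_
    simp only [Finset.mem_filter] at hu hv
    rw [hu.2, hv.2]
  calc (∏ x : Fin j, ∏ y : Fin k, evalMon (Z (σ x, τ y)) ((qshMat a b p q).entry x y))
      = ∏ x : Fin j, ∏ u ∈ Finset.univ.filter (fun u => p u = x),
          ∏ y : Fin k, ∏ v ∈ Finset.univ.filter (fun v => q v = y),
            evalMon (Z (σ (p u), τ (q v))) ((a.diag b).entry u v) := by
        refine Finset.prod_congr rfl fun x _ => ?_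
        rw [← Finset.prod_comm]
        exact Finset.prod_congr rfl fun y _ => hstep x y
    _ = ∏ u : Fin (a.rows + b.rows), ∏ v : Fin (a.cols + b.cols),
          evalMon (Z (σ (p u), τ (q v))) ((a.diag b).entry u v) := by
        rw [← Finset.prod_fiberwise Finset.univ p
          (fun u => ∏ v : Fin (a.cols + b.cols),
            evalMon (Z (σ (p u), τ (q v))) ((a.diag b).entry u v))]
        refine Finset.prod_congr rfl fun x _ => Finset.prod_congr rfl fun u _ => ?_
        exact Finset.prod_fiberwise Finset.univ q
          (fun v => evalMon (Z (σ (p u), τ (q v))) ((a.diag b).entry u v))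
    _ = _ := by
        rw [Fin.prod_univ_add (f := fun u => ∏ v : Fin (a.cols + b.cols),
          evalMon (Z (σ (p u), τ (q v))) ((a.diag b).entry u v))]
        congr 1
        · refine Finset.prod_congr rfl fun u _ => ?_
          rw [Fin.prod_univ_add (f := fun v =>
            evalMon (Z (σ (p (Fin.castAdd b.rows u)), τ (q v)))
              ((a.diag b).entry (Fin.castAdd b.rows u) v))]
          have hone : (∏ v : Fin b.cols,
              evalMon (Z (σ (p (Fin.castAdd b.rows u)), τ (q (Fin.natAdd a.cols v))))
                ((a.diag b).entry (Fin.castAdd b.rows u) (Fin.natAdd a.cols v))) = 1 := by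
            refine Finset.prod_eq_one fun v _ => ?_
            rw [diag_lr a b _ _ (by simpa using u.isLt) (by simp)]
            exact evalMon_zero _
          rw [hone, mul_one]
          refine Finset.prod_congr rfl fun v _ => ?_
          rw [diag_ll a b _ _ (by simpa using u.isLt) (by simpa using v.isLt)]
          simp
        · refine Finset.prod_congr rfl fun u _ => ?_
          rw [Fin.prod_univ_add (f := fun v =>
            evalMon (Z (σ (p (Fin.natAdd a.rows u)), τ (q v)))
              ((a.diag b).entry (Fin.natAdd a.rows u) v))]
          have hone : (∏ v : Fin a.cols,
              evalMon (Z (σ (p (Fin.natAdd a.rows u)), τ (q (Fin.castAdd b.cols v))))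
                ((a.diag b).entry (Fin.natAdd a.rows u) (Fin.castAdd b.cols v))) = 1 := by
            refine Finset.prod_eq_one fun v _ => ?_
            rw [diag_rl a b _ _ (by simp) (by simpa using v.isLt)]
            exact evalMon_zero _
          rw [hone, one_mul]
          refine Finset.prod_congr rfl fun v _ => ?_
          rw [diag_rr a b _ _ (by simp) (by simp)]
          congr 2 <;> simp

end Pointwise

end TwoParam

open TwoParam in
/-- the quasi-shuffle identity for the two-parameter sums
signature. -/
theorem statement1 {d : ℕ} {R : Type*} [CommRing R] [IsDomain R]
    (Z : ℕ × ℕ → Fin d → R) (l r : ℕ × ℕ) (a b : RawMat d)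
    (ha : a.IsComp) (hb : b.IsComp) :
    SSb Z l r a * SSb Z l r b =
      ∑ j ∈ Finset.range (a.rows + b.rows + 1),
        ∑ k ∈ Finset.range (a.cols + b.cols + 1),
          ∑ p ∈ qShSet a.rows b.rows j,
            ∑ q ∈ qShSet a.cols b.cols k,
              SSb Z l r (qshMat a b p q) := by
  classical
  have key : ∀ (j k : ℕ) (p : Fin (a.rows + b.rows) → Fin j)
      (q : Fin (a.cols + b.cols) → Fin k),
      SSb Z l r (qshMat a b p q) =
        ∑ σ ∈ chainsB j l.1 r.1, ∑ τ ∈ chainsB k l.2 r.2,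
          (∏ u : Fin a.rows, ∏ v : Fin a.cols,
            evalMon (Z (σ (p (Fin.castAdd b.rows u)), τ (q (Fin.castAdd b.cols v))))
              (a.entry u v)) *
          (∏ u : Fin b.rows, ∏ v : Fin b.cols,
            evalMon (Z (σ (p (Fin.natAdd a.rows u)), τ (q (Fin.natAdd a.cols v))))
              (b.entry u v)) := by
    intro j k p q
    show (∑ σ ∈ chainsB j l.1 r.1, ∑ τ ∈ chainsB k l.2 r.2,
      ∏ x : Fin j, ∏ y : Fin k,
        evalMon (Z (σ x, τ y)) ((qshMat a b p q).entry x y)) = _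
    exact Finset.sum_congr rfl fun σ _ => Finset.sum_congr rfl fun τ _ =>
      pointwise Z a b p q σ τ
  calc SSb Z l r a * SSb Z l r b
      = ∑ ι₁ ∈ chainsB a.rows l.1 r.1, ∑ ι₂ ∈ chainsB b.rows l.1 r.1,
          ∑ κ₁ ∈ chainsB a.cols l.2 r.2, ∑ κ₂ ∈ chainsB b.cols l.2 r.2,
            (∏ u : Fin a.rows, ∏ v : Fin a.cols,
              evalMon (Z (ι₁ u, κ₁ v)) (a.entry u v)) *
            (∏ u : Fin b.rows, ∏ v : Fin b.cols,
              evalMon (Z (ι₂ u, κ₂ v)) (b.entry u v)) := by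
        rw [SSb, SSb, Finset.sum_mul_sum]
        exact Finset.sum_congr rfl fun ι₁ _ => Finset.sum_congr rfl fun ι₂ _ => by
          rw [Finset.sum_mul_sum]
    _ = ∑ j ∈ Finset.range (a.rows + b.rows + 1), ∑ p ∈ qShSet a.rows b.rows j,
          ∑ σ ∈ chainsB j l.1 r.1,
            ∑ κ₁ ∈ chainsB a.cols l.2 r.2, ∑ κ₂ ∈ chainsB b.cols l.2 r.2,
              (∏ u : Fin a.rows, ∏ v : Fin a.cols,
                evalMon (Z (σ (p (Fin.castAdd b.rows u)), κ₁ v)) (a.entry u v)) *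
              (∏ u : Fin b.rows, ∏ v : Fin b.cols,
                evalMon (Z (σ (p (Fin.natAdd a.rows u)), κ₂ v)) (b.entry u v)) :=
        mergeSum l.1 r.1 (fun f g =>
          ∑ κ₁ ∈ chainsB a.cols l.2 r.2, ∑ κ₂ ∈ chainsB b.cols l.2 r.2,
            (∏ u : Fin a.rows, ∏ v : Fin a.cols,
              evalMon (Z (f u, κ₁ v)) (a.entry u v)) *
            (∏ u : Fin b.rows, ∏ v : Fin b.cols,
              evalMon (Z (g u, κ₂ v)) (b.entry u v)))
    _ = ∑ j ∈ Finset.range (a.rows + b.rows + 1), ∑ p ∈ qShSet a.rows b.rows j,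
          ∑ σ ∈ chainsB j l.1 r.1,
            ∑ k ∈ Finset.range (a.cols + b.cols + 1), ∑ q ∈ qShSet a.cols b.cols k,
              ∑ τ ∈ chainsB k l.2 r.2,
                (∏ u : Fin a.rows, ∏ v : Fin a.cols,
                  evalMon (Z (σ (p (Fin.castAdd b.rows u)), τ (q (Fin.castAdd b.cols v))))
                    (a.entry u v)) *
                (∏ u : Fin b.rows, ∏ v : Fin b.cols,
                  evalMon (Z (σ (p (Fin.natAdd a.rows u)), τ (q (Fin.natAdd a.cols v))))
                    (b.entry u v)) := by
        refine Finset.sum_congr rfl fun j _ => Finset.sum_congr rfl fun p _ =>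
          Finset.sum_congr rfl fun σ _ => ?_
        exact mergeSum l.2 r.2 (fun f g =>
          (∏ u : Fin a.rows, ∏ v : Fin a.cols,
            evalMon (Z (σ (p (Fin.castAdd b.rows u)), f v)) (a.entry u v)) *
          (∏ u : Fin b.rows, ∏ v : Fin b.cols,
            evalMon (Z (σ (p (Fin.natAdd a.rows u)), g v)) (b.entry u v)))
    _ = ∑ j ∈ Finset.range (a.rows + b.rows + 1), ∑ p ∈ qShSet a.rows b.rows j,
          ∑ k ∈ Finset.range (a.cols + b.cols + 1),
            ∑ σ ∈ chainsB j l.1 r.1, ∑ q ∈ qShSet a.cols b.cols k,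
              ∑ τ ∈ chainsB k l.2 r.2,
                (∏ u : Fin a.rows, ∏ v : Fin a.cols,
                  evalMon (Z (σ (p (Fin.castAdd b.rows u)), τ (q (Fin.castAdd b.cols v))))
                    (a.entry u v)) *
                (∏ u : Fin b.rows, ∏ v : Fin b.cols,
                  evalMon (Z (σ (p (Fin.natAdd a.rows u)), τ (q (Fin.natAdd a.cols v))))
                    (b.entry u v)) :=
        Finset.sum_congr rfl fun j _ => Finset.sum_congr rfl fun p _ => Finset.sum_comm
    _ = ∑ j ∈ Finset.range (a.rows + b.rows + 1), ∑ p ∈ qShSet a.rows b.rows j,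
          ∑ k ∈ Finset.range (a.cols + b.cols + 1),
            ∑ q ∈ qShSet a.cols b.cols k, ∑ σ ∈ chainsB j l.1 r.1,
              ∑ τ ∈ chainsB k l.2 r.2,
                (∏ u : Fin a.rows, ∏ v : Fin a.cols,
                  evalMon (Z (σ (p (Fin.castAdd b.rows u)), τ (q (Fin.castAdd b.cols v))))
                    (a.entry u v)) *
                (∏ u : Fin b.rows, ∏ v : Fin b.cols,
                  evalMon (Z (σ (p (Fin.natAdd a.rows u)), τ (q (Fin.natAdd a.cols v))))
                    (b.entry u v)) :=
        Finset.sum_congr rfl fun j _ => Finset.sum_congr rfl fun p _ =>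
          Finset.sum_congr rfl fun k _ => Finset.sum_comm
    _ = ∑ j ∈ Finset.range (a.rows + b.rows + 1),
          ∑ k ∈ Finset.range (a.cols + b.cols + 1),
            ∑ p ∈ qShSet a.rows b.rows j, ∑ q ∈ qShSet a.cols b.cols k,
              ∑ σ ∈ chainsB j l.1 r.1, ∑ τ ∈ chainsB k l.2 r.2,
                (∏ u : Fin a.rows, ∏ v : Fin a.cols,
                  evalMon (Z (σ (p (Fin.castAdd b.rows u)), τ (q (Fin.castAdd b.cols v))))
                    (a.entry u v)) *
                (∏ u : Fin b.rows, ∏ v : Fin b.cols,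
                  evalMon (Z (σ (p (Fin.natAdd a.rows u)), τ (q (Fin.natAdd a.cols v))))
                    (b.entry u v)) :=
        Finset.sum_congr rfl fun j _ => Finset.sum_comm
    _ = ∑ j ∈ Finset.range (a.rows + b.rows + 1),
        ∑ k ∈ Finset.range (a.cols + b.cols + 1),
          ∑ p ∈ qShSet a.rows b.rows j,
            ∑ q ∈ qShSet a.cols b.cols k,
              SSb Z l r (qshMat a b p q) :=
        Finset.sum_congr rfl fun j _ => Finset.sum_congr rfl fun k _ =>
          Finset.sum_congr rfl fun p _ => Finset.sum_congr rfl fun q _ =>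
            (key j k p q).symm
end

section
/- For all matrix compositions a, b over M_d, every matrix c^{p,q} occurring as a summand in the two-parameter quasi-shuffle a ⧢ b is again a matrix composition (it has no row and no column all of whose entries are ε); moreover, letting ω : M_d → ℕ₀ be the monoid homomorphism sending every generator to 1 and setting ω(a) := Σ_{i,j} ω(a_{i,j}), every summand c^{p,q} of a ⧢ b satisfies ω(c^{p,q}) = ω(a) + ω(b). -/
open scoped Classical

section Statement3Aux

open TwoParam Finset

/-- The weight homomorphism `Md d →+ ℕ` sending every generator to `1`. -/
noncomputable def TwoParam.wt (d : ℕ) : Md d →+ ℕ where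
  toFun f := f.sum fun _ e => e
  map_zero' := Finsupp.sum_zero_index
  map_add' f g := by
    show (f + g).sum (fun _ e => e) = f.sum (fun _ e => e) + g.sum (fun _ e => e)
    exact Finsupp.sum_add_index' (fun _ => rfl) (fun _ _ _ => rfl)

lemma TwoParam.wt_eq_zero_iff {d : ℕ} {f : Md d} : wt d f = 0 ↔ f = 0 := by
  constructor
  · intro h
    have h' : ∑ x ∈ f.support, f x = 0 := by
      simp only [wt, AddMonoidHom.coe_mk, ZeroHom.coe_mk] at h
      rwa [Finsupp.sum] at h
    ext x
    by_contra hx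
    exact hx ((Finset.sum_eq_zero_iff).1 h' x (Finsupp.mem_support_iff.2 hx))
  · rintro rfl; exact map_zero _

lemma TwoParam.sum_md_ne_zero {d : ℕ} {ι : Type*} {s : Finset ι} {f : ι → Md d}
    {i : ι} (hi : i ∈ s) (h : f i ≠ 0) : ∑ x ∈ s, f x ≠ 0 := by
  intro h0
  have h1 : ∑ x ∈ s, wt d (f x) = 0 := by rw [← map_sum, h0, map_zero]
  exact h (wt_eq_zero_iff.1 ((Finset.sum_eq_zero_iff).1 h1 i hi))

lemma TwoParam.diag_entry_lt {d : ℕ} (a b : RawMat d) {u v : ℕ}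
    (hu : u < a.rows) (hv : v < a.cols) :
    (a.diag b).entry u v = a.entry u v := by
  simp only [RawMat.diag]
  rw [if_pos ⟨hu, hv⟩]

lemma TwoParam.diag_entry_ge {d : ℕ} (a b : RawMat d) (u v : ℕ) :
    (a.diag b).entry (a.rows + u) (a.cols + v) = b.entry u v := by
  simp only [RawMat.diag]
  rw [if_neg (by omega), if_pos (by omega)]
  congr 1 <;> omega

lemma TwoParam.diag_entry_mix₁ {d : ℕ} (a b : RawMat d) {u : ℕ} (hu : u < a.rows)
    (v : ℕ) : (a.diag b).entry u (a.cols + v) = 0 := by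
  simp only [RawMat.diag]
  rw [if_neg (by omega), if_neg (by omega)]

lemma TwoParam.diag_entry_mix₂ {d : ℕ} (a b : RawMat d) (u : ℕ) {v : ℕ}
    (hv : v < a.cols) : (a.diag b).entry (a.rows + u) v = 0 := by
  simp only [RawMat.diag]
  rw [if_neg (by omega), if_neg (by omega)]

/-- Every row of the diagonal concatenation of two compositions has a
nonzero entry. -/
lemma TwoParam.diag_row {d : ℕ} {a b : RawMat d} (ha : a.IsComp) (hb : b.IsComp)
    (u : ℕ) (hu : u < a.rows + b.rows) :
    ∃ v < a.cols + b.cols, (a.diag b).entry u v ≠ 0 := by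
  by_cases h : u < a.rows
  · obtain ⟨v, hv, hne⟩ := ha.1 u h
    exact ⟨v, by omega, by rw [diag_entry_lt a b h hv]; exact hne⟩
  · obtain ⟨v, hv, hne⟩ := hb.1 (u - a.rows) (by omega)
    refine ⟨a.cols + v, by omega, ?_⟩
    have : u = a.rows + (u - a.rows) := by omega
    rw [this, diag_entry_ge]
    exact hne

/-- Every column of the diagonal concatenation of two compositions has a
nonzero entry. -/
lemma TwoParam.diag_col {d : ℕ} {a b : RawMat d} (ha : a.IsComp) (hb : b.IsComp)
    (v : ℕ) (hv : v < a.cols + b.cols) :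
    ∃ u < a.rows + b.rows, (a.diag b).entry u v ≠ 0 := by
  by_cases h : v < a.cols
  · obtain ⟨u, hu, hne⟩ := ha.2 v h
    exact ⟨u, by omega, by rw [diag_entry_lt a b hu h]; exact hne⟩
  · obtain ⟨u, hu, hne⟩ := hb.2 (v - a.cols) (by omega)
    refine ⟨a.rows + u, by omega, ?_⟩
    have : v = a.cols + (v - a.cols) := by omega
    rw [this, diag_entry_ge]
    exact hne

/-- If some entry of `diag a b` in the fibers of `(x, y)` is nonzero, then
so is the corresponding entry of the quasi-shuffle summand. -/
lemma TwoParam.qshMat_entry_ne {d : ℕ} (a b : RawMat d) {j k : ℕ}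
    (p : Fin (a.rows + b.rows) → Fin j) (q : Fin (a.cols + b.cols) → Fin k)
    (u : Fin (a.rows + b.rows)) (v : Fin (a.cols + b.cols))
    (h : (a.diag b).entry u v ≠ 0) :
    (qshMat a b p q).entry (p u) (q v) ≠ 0 := by
  simp only [qshMat]
  rw [dif_pos (p u).isLt, dif_pos (q v).isLt]
  refine sum_md_ne_zero (i := u) ?_ ?_
  · simp [Fin.eta]
  · refine sum_md_ne_zero (i := v) ?_ h
    simp [Fin.eta]

end Statement3Aux

open TwoParam in
/-- every quasi-shuffle summand `c^{p,q}` of two matrix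
compositions is a matrix composition, of weight `ω(a) + ω(b)`. -/
theorem statement3 {d : ℕ} (a b : RawMat d) (ha : a.IsComp) (hb : b.IsComp)
    {j k : ℕ} (p : Fin (a.rows + b.rows) → Fin j)
    (q : Fin (a.cols + b.cols) → Fin k)
    (hp : p ∈ qShSet a.rows b.rows j) (hq : q ∈ qShSet a.cols b.cols k) :
    (qshMat a b p q).IsComp ∧
      (qshMat a b p q).weight = a.weight + b.weight := by
  obtain ⟨hsurjp, -, -⟩ := (Finset.mem_filter.1 hp).2
  obtain ⟨hsurjq, -, -⟩ := (Finset.mem_filter.1 hq).2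
  constructor
  · constructor
    · intro x hx
      obtain ⟨u, hu⟩ := hsurjp ⟨x, hx⟩
      obtain ⟨v', hv', hne⟩ := diag_row ha hb u u.isLt
      set v : Fin (a.cols + b.cols) := ⟨v', hv'⟩
      refine ⟨q v, (q v).isLt, ?_⟩
      have := qshMat_entry_ne a b p q u v hne
      rwa [hu] at this
    · intro y hy
      obtain ⟨v, hv⟩ := hsurjq ⟨y, hy⟩
      obtain ⟨u', hu', hne⟩ := diag_col ha hb v v.isLt
      set u : Fin (a.rows + b.rows) := ⟨u', hu'⟩
      refine ⟨p u, (p u).isLt, ?_⟩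
      have := qshMat_entry_ne a b p q u v hne
      rwa [hv] at this
  · have key : ∀ (c : RawMat d), c.weight =
        ∑ i ∈ Finset.range c.rows, ∑ j ∈ Finset.range c.cols,
          wt d (c.entry i j) := fun c => by
      simp only [RawMat.weight, wt, AddMonoidHom.coe_mk, ZeroHom.coe_mk, Finsupp.sum]
    rw [key, key, key]
    have h1 : ∀ (x : Fin j) (y : Fin k),
        wt d ((qshMat a b p q).entry x y) =
        ∑ u ∈ Finset.univ.filter (fun u => p u = x),
          ∑ v ∈ Finset.univ.filter (fun v => q v = y),
            wt d ((a.diag b).entry u v) := by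
      intro x y
      simp only [qshMat]
      rw [dif_pos x.isLt, dif_pos y.isLt]
      simp only [Fin.eta]
      rw [map_sum]
      exact Finset.sum_congr rfl fun u _ => map_sum _ _ _
    have h2 :
        (∑ i ∈ Finset.range (qshMat a b p q).rows,
          ∑ j' ∈ Finset.range (qshMat a b p q).cols,
            wt d ((qshMat a b p q).entry i j')) =
        ∑ u : Fin (a.rows + b.rows), ∑ v : Fin (a.cols + b.cols),
          wt d ((a.diag b).entry u v) := by
      show (∑ x ∈ Finset.range j, ∑ y ∈ Finset.range k,
          wt d ((qshMat a b p q).entry x y)) = _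
      rw [← Fin.sum_univ_eq_sum_range
        (fun x => ∑ y ∈ Finset.range k, wt d ((qshMat a b p q).entry x y)) j]
      have : ∀ x : Fin j,
          (∑ y ∈ Finset.range k, wt d ((qshMat a b p q).entry x y)) =
          ∑ y : Fin k, wt d ((qshMat a b p q).entry x y) :=
        fun x => (Fin.sum_univ_eq_sum_range
          (fun y => wt d ((qshMat a b p q).entry x y)) k).symm
      calc (∑ x : Fin j, ∑ y ∈ Finset.range k,
              wt d ((qshMat a b p q).entry x y))
          = ∑ x : Fin j, ∑ y : Fin k, wt d ((qshMat a b p q).entry x y) :=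
            Finset.sum_congr rfl fun x _ => this x
        _ = ∑ x : Fin j, ∑ u ∈ Finset.univ.filter (fun u => p u = x),
              ∑ y : Fin k, ∑ v ∈ Finset.univ.filter (fun v => q v = y),
                wt d ((a.diag b).entry u v) := by
            refine Finset.sum_congr rfl fun x _ => ?_
            simp only [h1]
            exact Finset.sum_comm
        _ = ∑ u : Fin (a.rows + b.rows),
              ∑ y : Fin k, ∑ v ∈ Finset.univ.filter (fun v => q v = y),
                wt d ((a.diag b).entry u v) :=
            Finset.sum_fiberwise _ _ _
        _ = _ := Finset.sum_congr rfl fun u _ => Finset.sum_fiberwise _ _ _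
    rw [h2]
    have h3 : (∑ u : Fin (a.rows + b.rows), ∑ v : Fin (a.cols + b.cols),
          wt d ((a.diag b).entry u v)) =
        ∑ u ∈ Finset.range (a.rows + b.rows),
          ∑ v ∈ Finset.range (a.cols + b.cols),
            wt d ((a.diag b).entry u v) := by
      rw [← Fin.sum_univ_eq_sum_range
        (fun u => ∑ v ∈ Finset.range (a.cols + b.cols),
          wt d ((a.diag b).entry u v))]
      exact Finset.sum_congr rfl fun u _ =>
        (Fin.sum_univ_eq_sum_range (fun v => wt d ((a.diag b).entry u v)) _)
    rw [h3, Finset.sum_range_add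
      (fun u => ∑ v ∈ Finset.range (a.cols + b.cols),
        wt d ((a.diag b).entry u v))]
    congr 1
    · refine Finset.sum_congr rfl fun u hu => ?_
      have hu' : u < a.rows := Finset.mem_range.1 hu
      rw [Finset.sum_range_add (fun v => wt d ((a.diag b).entry u v))]
      have e1 : (∑ v ∈ Finset.range a.cols, wt d ((a.diag b).entry u v)) =
          ∑ v ∈ Finset.range a.cols, wt d (a.entry u v) :=
        Finset.sum_congr rfl fun v hv => by
          rw [diag_entry_lt a b hu' (Finset.mem_range.1 hv)]
      have e2 : (∑ v ∈ Finset.range b.cols,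
          wt d ((a.diag b).entry u (a.cols + v))) = 0 :=
        Finset.sum_eq_zero fun v _ => by
          rw [diag_entry_mix₁ a b hu' v]; exact map_zero _
      rw [e1, e2, add_zero]
    · refine Finset.sum_congr rfl fun u _ => ?_
      rw [Finset.sum_range_add (fun v => wt d ((a.diag b).entry (a.rows + u) v))]
      have e1 : (∑ v ∈ Finset.range a.cols,
          wt d ((a.diag b).entry (a.rows + u) v)) = 0 :=
        Finset.sum_eq_zero fun v hv => by
          rw [diag_entry_mix₂ a b u (Finset.mem_range.1 hv)]; exact map_zero _
      have e2 : (∑ v ∈ Finset.range b.cols,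
          wt d ((a.diag b).entry (a.rows + u) (a.cols + v))) =
          ∑ v ∈ Finset.range b.cols, wt d (b.entry u v) :=
        Finset.sum_congr rfl fun v _ => by rw [diag_entry_ge]
      rw [e1, e2, zero_add]
end
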